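/- (Linear regression drift identity for the exchangeable pair.) With strata of sizes n_s ≥ 2 summing to n, real numbers b_i^s, c_i^s (1 ≤ i ≤ n_s, 1 ≤ s ≤ 𝒮) satisfying Σ_i b_i^s = Σ_i c_i^s = 0 for each s, set a_{ij}^s = b_i^s c_j^s, σ_n > 0, and T^π = σ_n⁻¹ Σ_{s=1}^{𝒮} Σ_{i=1}^{n_s} a_{iπ(i)}^s for a stratified permutation π. Let π be uniform on 𝕊_n and let π′ be obtained from π by the stratified random-transposition construction (random stratum S^e with P(S^e=s) = (n_s−1)/(n−𝒮), uniformly random ordered pair (I,J) of distinct indices in that stratum, and π′ = π composed with the transposition (I,J)). Then E[T^{π′} − T^π | π] = −λ T^π, where λ = 2/(n − 𝒮). -/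

import Mathlib

open Finset
open scoped Classical

/-- Size of stratum `s` for the stratum-assignment map `C`. -/
noncomputable def strataSize {n S : ℕ} (C : Fin n → Fin S) (s : Fin S) : ℕ :=
  (Finset.univ.filter fun i => C i = s).card

/-- The linear permutation statistic `T^π = σ⁻¹ Σ_i b_i c_{π(i)}`. -/
noncomputable def Tstat {n : ℕ} (σ : ℝ) (b c : Fin n → ℝ) (g : Equiv.Perm (Fin n)) : ℝ :=
  σ⁻¹ * ∑ i, b i * c (g i)

lemma Tstat_swap_diff {n : ℕ} (σ : ℝ) (b c : Fin n → ℝ) (g : Equiv.Perm (Fin n))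
    (i j : Fin n) (hij : i ≠ j) :
    Tstat σ b c (g * Equiv.swap i j) - Tstat σ b c g
      = σ⁻¹ * (b i * c (g j) + b j * c (g i) - b i * c (g i) - b j * c (g j)) := by
  unfold Tstat
  rw [← mul_sub, ← Finset.sum_sub_distrib]
  congr 1
  have := Fintype.sum_eq_add (f := fun k =>
      b k * c ((g * Equiv.swap i j) k) - b k * c (g k)) i j hij ?_
  · rw [this]
    simp only [Equiv.Perm.mul_apply, Equiv.swap_apply_left, Equiv.swap_apply_right]
    ring
  · intro x ⟨hxi, hxj⟩
    simp [Equiv.swap_apply_of_ne_of_ne hxi hxj]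

lemma coef_algebra (x ns σi A : ℝ) (h1 : ns ≠ 0) (h2 : ns - 1 ≠ 0) :
    ((ns - 1) / x) * (ns * (ns - 1))⁻¹ * (σi * (-2 * ns * A)) = -(2 / x) * σi * A := by
  rw [mul_inv, div_eq_mul_inv, div_eq_mul_inv]
  have c1 : ns * ns⁻¹ = 1 := mul_inv_cancel₀ h1
  have c2 : (ns - 1) * (ns - 1)⁻¹ = 1 := mul_inv_cancel₀ h2
  calc ((ns - 1) * x⁻¹) * (ns⁻¹ * (ns - 1)⁻¹) * (σi * (-2 * ns * A))
      = ((ns - 1) * (ns - 1)⁻¹) * (ns * ns⁻¹) * (x⁻¹ * (σi * (-2 * A))) := by ring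
    _ = -(2 * x⁻¹) * σi * A := by rw [c1, c2]; ring

/-- **Linear regression (drift) identity for the Stein exchangeable pair** (Statement 16).
With strata of sizes `n_s ≥ 2`, arrays `b, c` with vanishing within-stratum sums, `σ_n > 0` and
`T^π = σ_n⁻¹ Σ_i b_i c_{π(i)}`, the stratified random-transposition construction (stratum `S^e`
drawn with probability `(n_s−1)/(n−𝒮)`, then a uniformly random ordered pair `(I,J)` of distinct
indices in that stratum, and `π′ = π ∘ (I,J)`) satisfies
`E[T^{π′} − T^π | π] = −λ T^π` with `λ = 2/(n − 𝒮)`, for every stratified permutation `π`. -/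
theorem stmt16 (n S : ℕ) (hS : 1 ≤ S) (C : Fin n → Fin S)
    (hsize : ∀ s, 2 ≤ strataSize C s)
    (b c : Fin n → ℝ)
    (hb : ∀ s, ∑ i ∈ Finset.univ.filter (fun i => C i = s), b i = 0)
    (hc : ∀ s, ∑ i ∈ Finset.univ.filter (fun i => C i = s), c i = 0)
    (σ : ℝ) (hσ : 0 < σ)
    (g : Equiv.Perm (Fin n)) (hg : ∀ i, C (g i) = C i) :
    ∑ s : Fin S,
        (((strataSize C s : ℝ) - 1) / ((n : ℝ) - (S : ℝ))) *
          ((strataSize C s : ℝ) * ((strataSize C s : ℝ) - 1))⁻¹ *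
          (∑ i ∈ Finset.univ.filter (fun i => C i = s),
            ∑ j ∈ Finset.univ.filter (fun j => C j = s),
              (if i = j then 0 else
                Tstat σ b c (g * Equiv.swap i j) - Tstat σ b c g))
      = -(2 / ((n : ℝ) - (S : ℝ))) * Tstat σ b c g := by
  have key : ∀ s : Fin S,
      (((strataSize C s : ℝ) - 1) / ((n : ℝ) - (S : ℝ))) *
          ((strataSize C s : ℝ) * ((strataSize C s : ℝ) - 1))⁻¹ *
          (∑ i ∈ Finset.univ.filter (fun i => C i = s),
            ∑ j ∈ Finset.univ.filter (fun j => C j = s),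
              (if i = j then 0 else
                Tstat σ b c (g * Equiv.swap i j) - Tstat σ b c g))
        = -(2 / ((n : ℝ) - (S : ℝ))) * σ⁻¹ *
            ∑ i ∈ Finset.univ.filter (fun i => C i = s), b i * c (g i) := by
    intro s
    set F := Finset.univ.filter (fun i : Fin n => C i = s) with hF
    have hbF : ∑ i ∈ F, b i = 0 := hb s
    have hcg : ∑ j ∈ F, c (g j) = 0 := by
      rw [← hc s]
      apply Finset.sum_nbij' (fun j => g j) (fun j => g⁻¹ j)
      · intro a ha
        simp only [hF, Finset.mem_filter, Finset.mem_univ, true_and] at ha ⊢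
        rw [hg]; exact ha
      · intro a ha
        simp only [hF, Finset.mem_filter, Finset.mem_univ, true_and] at ha ⊢
        rw [← hg (g⁻¹ a), Equiv.Perm.inv_def, Equiv.apply_symm_apply]; exact ha
      · intro a _; simp
      · intro a _; simp
      · intro a _; rfl
    have hterm : ∀ i ∈ F, ∀ j ∈ F,
        (if i = j then 0 else Tstat σ b c (g * Equiv.swap i j) - Tstat σ b c g)
          = σ⁻¹ * (b i * c (g j) + b j * c (g i) - b i * c (g i) - b j * c (g j)) := by
      intro i _ j _
      by_cases h : i = j
      · subst h; simp
      · rw [if_neg h, Tstat_swap_diff σ b c g i j h]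
    have hinner : ∀ i ∈ F,
        ∑ j ∈ F, (b i * c (g j) + b j * c (g i) - b i * c (g i) - b j * c (g j))
          = -((F.card : ℝ) * (b i * c (g i))) - ∑ j ∈ F, b j * c (g j) := by
      intro i _
      rw [Finset.sum_sub_distrib, Finset.sum_sub_distrib, Finset.sum_add_distrib,
        ← Finset.mul_sum, hcg, ← Finset.sum_mul, hbF, Finset.sum_const, nsmul_eq_mul]
      ring
    have hdouble :
        (∑ i ∈ F, ∑ j ∈ F, (if i = j then 0 else
            Tstat σ b c (g * Equiv.swap i j) - Tstat σ b c g))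
          = σ⁻¹ * (-2 * (strataSize C s : ℝ) * ∑ i ∈ F, b i * c (g i)) := by
      rw [Finset.sum_congr rfl (fun i hi => Finset.sum_congr rfl (hterm i hi))]
      have : ∀ i ∈ F, ∑ j ∈ F,
          σ⁻¹ * (b i * c (g j) + b j * c (g i) - b i * c (g i) - b j * c (g j))
            = σ⁻¹ * (-((F.card : ℝ) * (b i * c (g i))) - ∑ j ∈ F, b j * c (g j)) := by
        intro i hi
        rw [← Finset.mul_sum, hinner i hi]
      rw [Finset.sum_congr rfl this, ← Finset.mul_sum]
      congr 1
      rw [Finset.sum_sub_distrib, Finset.sum_const, nsmul_eq_mul, Finset.sum_neg_distrib,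
        ← Finset.mul_sum]
      have hcard : (F.card : ℝ) = (strataSize C s : ℝ) := by rw [hF]; rfl
      rw [hcard]
      ring
    rw [hdouble]
    have hns : (2 : ℝ) ≤ (strataSize C s : ℝ) := by exact_mod_cast hsize s
    exact coef_algebra _ _ _ _ (by linarith) (by linarith)
  rw [Finset.sum_congr rfl (fun s _ => key s)]
  rw [← Finset.mul_sum, Finset.sum_fiberwise Finset.univ C (fun i => b i * c (g i))]
  unfold Tstat
  ring
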